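/- arXiv:1606.01715 — 2 statements merged into one kernel-verified Lean document; each statement's English description precedes it below -/
import Mathlib

section
/- ∑_{n : α(n) ≤ x} Λ(n) = log lcm(a_1, a_2, …, a_{⌊x⌋}) for all real x ≥ 1. -/
open Finset ArithmeticFunction

noncomputable def fibAlpha (n : ℕ) : ℕ := sInf {m | 0 < m ∧ n ∣ Nat.fib m}

lemma exists_fib_dvd (n : ℕ) (hn : 0 < n) : ∃ m, 0 < m ∧ n ∣ Nat.fib m := by
  haveI : NeZero n := ⟨hn.ne'⟩
  set F : ZMod n × ZMod n → ZMod n × ZMod n := fun p => (p.2, p.1 + p.2) with hF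
  have hinj : Function.Injective F := by
    intro a b h
    simp only [hF, Prod.mk.injEq] at h
    obtain ⟨h1, h2⟩ := h
    have : a.1 = b.1 := by
      have := h2; rw [h1] at this; exact add_right_cancel this
    exact Prod.ext this h1
  have hiter : ∀ m : ℕ, F^[m] ((0 : ZMod n), (1 : ZMod n))
      = ((Nat.fib m : ZMod n), (Nat.fib (m+1) : ZMod n)) := by
    intro m
    induction m with
    | zero => simp
    | succ k ih =>
        rw [Function.iterate_succ_apply', ih]
        have h2 : ((Nat.fib k : ZMod n) + (Nat.fib (k+1) : ZMod n))
            = (Nat.fib (k + 1 + 1) : ZMod n) := by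
          rw [Nat.fib_add_two]; push_cast; ring
        simp only [hF]
        exact Prod.ext rfl h2
  -- pigeonhole: some iterate returns to the start
  obtain ⟨i, j, hne, hij⟩ :=
    Finite.exists_ne_map_eq_of_infinite (fun m : ℕ => F^[m] ((0 : ZMod n), (1 : ZMod n)))
  wlog hlt : i < j generalizing i j
  · exact this j i hne.symm hij.symm (by omega)
  have hkey : F^[j - i] ((0 : ZMod n), (1 : ZMod n)) = ((0 : ZMod n), (1 : ZMod n)) := by
    have : F^[i] (F^[j - i] ((0 : ZMod n), (1 : ZMod n))) = F^[i] ((0 : ZMod n), (1 : ZMod n)) := by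
      rw [← Function.iterate_add_apply]
      rw [show i + (j - i) = j by omega]
      exact hij.symm
    exact hinj.iterate i this
  refine ⟨j - i, by omega, ?_⟩
  rw [hiter] at hkey
  have : (Nat.fib (j - i) : ZMod n) = 0 := by
    simpa using congrArg Prod.fst hkey
  exact (ZMod.natCast_eq_zero_iff _ _).mp this

lemma fibAlpha_mem (n : ℕ) (hn : 0 < n) : 0 < fibAlpha n ∧ n ∣ Nat.fib (fibAlpha n) :=
  Nat.sInf_mem (exists_fib_dvd n hn)

lemma fibAlpha_le {n m : ℕ} (hm : 0 < m) (h : n ∣ Nat.fib m) : fibAlpha n ≤ m :=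
  Nat.sInf_le ⟨hm, h⟩

lemma pow_dvd_finset_lcm {p k : ℕ} (hp : p.Prime) (hk : 0 < k) (s : Finset ℕ) (f : ℕ → ℕ)
    (hf : ∀ i ∈ s, f i ≠ 0) (h : p ^ k ∣ s.lcm f) : ∃ i ∈ s, p ^ k ∣ f i := by
  induction s using Finset.induction_on with
  | empty =>
      simp only [Finset.lcm_empty, Nat.dvd_one] at h
      exact absurd h (Nat.one_lt_pow hk.ne' hp.one_lt).ne'
  | @insert a s ha ih =>
      rw [Finset.lcm_insert] at h
      have hfa : f a ≠ 0 := hf a (mem_insert_self a s)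
      have hls : s.lcm f ≠ 0 := by
        rw [Ne, Finset.lcm_eq_zero_iff]
        rintro ⟨i, hi, h0⟩
        exact hf i (mem_insert_of_mem hi) h0
      have hl0 : Nat.lcm (f a) (s.lcm f) ≠ 0 := Nat.lcm_ne_zero hfa hls
      rw [lcm_eq_nat_lcm, Nat.Prime.pow_dvd_iff_le_factorization hp hl0,
        Nat.factorization_lcm hfa hls] at h
      simp only [Finsupp.sup_apply, le_sup_iff] at h
      rcases h with h | h
      · exact ⟨a, mem_insert_self a s, (Nat.Prime.pow_dvd_iff_le_factorization hp hfa).mpr h⟩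
      · obtain ⟨i, hi, hd⟩ := ih (fun i hi => hf i (mem_insert_of_mem hi))
          ((Nat.Prime.pow_dvd_iff_le_factorization hp hls).mpr h)
        exact ⟨i, mem_insert_of_mem hi, hd⟩

theorem vonMangoldt_sum_alpha_eq_log_lcm (x : ℝ) (hx : 1 ≤ x) :
    ∑ n ∈ (Icc 1 (Nat.fib ⌊x⌋₊)).filter (fun n => fibAlpha n ≤ ⌊x⌋₊), Λ n
      = Real.log (((Icc 1 ⌊x⌋₊).lcm Nat.fib : ℕ) : ℝ) := by
  set m := ⌊x⌋₊ with hm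
  have hm1 : 1 ≤ m := by
    rw [hm]
    exact_mod_cast Nat.le_floor (by exact_mod_cast hx)
  set L : ℕ := (Icc 1 m).lcm Nat.fib with hL
  have hfib0 : ∀ i ∈ Icc 1 m, Nat.fib i ≠ 0 := by
    intro i hi
    simp only [mem_Icc] at hi
    exact (Nat.fib_pos.mpr hi.1).ne'
  have hL0 : L ≠ 0 := by
    rw [hL, Ne, Finset.lcm_eq_zero_iff]
    rintro ⟨i, hi, h0⟩
    exact hfib0 i hi h0
  rw [← vonMangoldt_sum]
  apply Finset.sum_subset
  · intro n hn
    simp only [mem_filter, mem_Icc] at hn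
    obtain ⟨⟨hn1, _⟩, hα⟩ := hn
    obtain ⟨hα0, hdvd⟩ := fibAlpha_mem n hn1
    rw [Nat.mem_divisors]
    exact ⟨hdvd.trans (Finset.dvd_lcm (by simp [mem_Icc]; omega)), hL0⟩
  · intro n hn hnotin
    by_contra hΛ
    have hpp : IsPrimePow n := vonMangoldt_ne_zero_iff.mp hΛ
    obtain ⟨p, k, hp, hk, hpk⟩ := hpp
    rw [Nat.mem_divisors] at hn
    obtain ⟨i, hi, hdvd⟩ := pow_dvd_finset_lcm hp.nat_prime hk (Icc 1 m) Nat.fib hfib0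
      (hpk ▸ hn.1)
    rw [hpk] at hdvd
    simp only [mem_Icc] at hi
    apply hnotin
    simp only [mem_filter, mem_Icc]
    have hfi : 0 < Nat.fib i := Nat.fib_pos.mpr hi.1
    refine ⟨⟨?_, ?_⟩, (fibAlpha_le (m := i) (by omega) hdvd).trans hi.2⟩
    · rw [← hpk]; exact hp.nat_prime.one_lt.le.trans (Nat.le_self_pow hk.ne' p)
    · exact (Nat.le_of_dvd hfi hdvd).trans (Nat.fib_mono hi.2)
end

section
/- Define Δ(n) := -μ(n/4) if 4 | n and Δ(n) := 0 otherwise. Then Δ lies in the kernel of α-contraction: ∑_{d : α(d) = n} Δ(d) = 0 for all n ≥ 1. -/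
open Finset

noncomputable def alphaCon (f : ℕ → ℤ) (n : ℕ) : ℤ :=
  ∑ m ∈ (Icc 1 (Nat.fib n)).filter (fun m => fibAlpha m = n), f m

/-- If `m ∣ fib j` with `j > 0`, then `fibAlpha m` is positive and divides `j`. -/
lemma fibAlpha_dvd {m j : ℕ} (hj : 0 < j) (h : m ∣ Nat.fib j) :
    0 < fibAlpha m ∧ fibAlpha m ∣ j := by
  have hne : ({t | 0 < t ∧ m ∣ Nat.fib t} : Set ℕ).Nonempty := ⟨j, hj, h⟩
  have hmem := Nat.sInf_mem hne
  set a := fibAlpha m with ha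
  obtain ⟨hapos, hadvd⟩ : 0 < a ∧ m ∣ Nat.fib a := hmem
  refine ⟨hapos, ?_⟩
  have hgd : m ∣ Nat.fib (Nat.gcd a j) := by
    rw [Nat.fib_gcd]
    exact Nat.dvd_gcd hadvd h
  have hgpos : 0 < Nat.gcd a j := Nat.gcd_pos_of_pos_left _ hapos
  have hle : a ≤ Nat.gcd a j := Nat.sInf_le ⟨hgpos, hgd⟩
  have hge : Nat.gcd a j ≤ a := Nat.gcd_le_left _ hapos
  have : Nat.gcd a j = a := le_antisymm hge hle
  rw [← this]
  exact Nat.gcd_dvd_right a j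

lemma dvd_fib_of_fibAlpha_dvd {m j : ℕ} (hm : 0 < fibAlpha m ∨ (∃ t, 0 < t ∧ m ∣ Nat.fib t))
    (h : fibAlpha m ∣ j) : m ∣ Nat.fib j := by
  have hne : ({t | 0 < t ∧ m ∣ Nat.fib t} : Set ℕ).Nonempty := by
    rcases hm with hm | hm
    · by_contra hc
      have : fibAlpha m = 0 := by
        unfold fibAlpha
        rw [Set.not_nonempty_iff_eq_empty.mp hc, Nat.sInf_empty]
      omega
    · exact hm
  obtain ⟨_, hdvd⟩ := Nat.sInf_mem hne
  exact hdvd.trans (Nat.fib_dvd _ _ h)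

lemma four_dvd_fib_iff {j : ℕ} (hj : 0 < j) : 4 ∣ Nat.fib j ↔ 6 ∣ j := by
  have h6 : fibAlpha 4 = 6 := by
    have hmem : (6 : ℕ) ∈ {t | 0 < t ∧ 4 ∣ Nat.fib t} := by norm_num
    have hle : fibAlpha 4 ≤ 6 := Nat.sInf_le hmem
    have hmem2 := Nat.sInf_mem (⟨6, hmem⟩ : ({t | 0 < t ∧ 4 ∣ Nat.fib t} : Set ℕ).Nonempty)
    obtain ⟨hpos, hdvd⟩ : 0 < fibAlpha 4 ∧ 4 ∣ Nat.fib (fibAlpha 4) := hmem2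
    interval_cases h : (fibAlpha 4) <;> revert hdvd <;> decide
  constructor
  · intro h
    have := fibAlpha_dvd hj h
    rw [h6] at this
    exact this.2
  · intro h
    have : 4 ∣ Nat.fib 6 := by decide
    exact (dvd_fib_of_fibAlpha_dvd (Or.inl (by rw [h6]; norm_num)) (h6 ▸ h))

/-- The filtered `Icc` in `alphaCon` can be replaced by the divisors of `fib n`. -/
lemma alphaCon_eq_sum_divisors (f : ℕ → ℤ) (n : ℕ) (hn : 0 < n) :
    alphaCon f n = ∑ m ∈ (Nat.fib n).divisors.filter (fun m => fibAlpha m = n), f m := by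
  unfold alphaCon
  congr 1
  ext m
  simp only [mem_filter, mem_Icc, Nat.mem_divisors]
  have hfpos : 0 < Nat.fib n := Nat.fib_pos.mpr hn
  constructor
  · rintro ⟨⟨h1, h2⟩, ha⟩
    refine ⟨⟨?_, hfpos.ne'⟩, ha⟩
    exact dvd_fib_of_fibAlpha_dvd (Or.inl (ha ▸ hn)) (ha ▸ dvd_refl n)
  · rintro ⟨⟨h1, h2⟩, ha⟩
    exact ⟨⟨Nat.pos_of_dvd_of_pos h1 hfpos, Nat.le_of_dvd hfpos h1⟩, ha⟩

/-- `Δ(n) = -μ(n/4)` if `4 ∣ n`, else `0`, lies in the kernel of α-contraction. -/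
theorem delta_in_kernel_alphaCon (n : ℕ) (hn : 0 < n) :
    alphaCon (fun m => if 4 ∣ m then -(ArithmeticFunction.moebius (m / 4) : ℤ) else 0) n
      = 0 := by
  induction n using Nat.strong_induction_on with
  | _ n ih =>
  set Δ : ℕ → ℤ := fun m => if 4 ∣ m then -(ArithmeticFunction.moebius (m / 4) : ℤ) else 0
    with hΔ
  have hfpos : 0 < Nat.fib n := Nat.fib_pos.mpr hn
  -- sum over all divisors of fib n of Δ is zero
  have htot : ∑ m ∈ (Nat.fib n).divisors, Δ m = 0 := by
    rw [← Finset.sum_filter_add_sum_filter_not _ (fun m => 4 ∣ m)]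
    have h2 : ∑ m ∈ (Nat.fib n).divisors.filter (fun m => ¬ 4 ∣ m), Δ m = 0 := by
      apply Finset.sum_eq_zero
      intro m hm
      simp only [mem_filter] at hm
      simp [hΔ, hm.2]
    rw [h2, add_zero]
    by_cases h6 : 6 ∣ n
    · -- 4 ∣ fib n; reindex by m = 4k
      have h4 : 4 ∣ Nat.fib n := (four_dvd_fib_iff hn).mpr h6
      have hkey : ∑ m ∈ (Nat.fib n).divisors.filter (fun m => 4 ∣ m), Δ m
          = -∑ k ∈ (Nat.fib n / 4).divisors, (ArithmeticFunction.moebius k : ℤ) := by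
        rw [← Finset.sum_neg_distrib]
        apply Finset.sum_nbij' (fun m => m / 4) (fun k => 4 * k)
        · intro m hm
          simp only [mem_filter, Nat.mem_divisors] at hm
          obtain ⟨⟨hdvd, hne⟩, h4m⟩ := hm
          simp only [Nat.mem_divisors]
          constructor
          · obtain ⟨k, rfl⟩ := h4m
            rw [Nat.mul_div_cancel_left k (by norm_num : 0 < 4), Nat.dvd_div_iff_mul_dvd h4]
            exact hdvd
          · obtain ⟨d, hd⟩ := h4
            have : 0 < Nat.fib n := hfpos
            omega
        · intro k hk
          simp only [Nat.mem_divisors] at hk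
          simp only [mem_filter, Nat.mem_divisors]
          exact ⟨⟨(Nat.dvd_div_iff_mul_dvd h4).mp hk.1, hfpos.ne'⟩, ⟨k, rfl⟩⟩
        · intro m hm
          simp only [mem_filter] at hm
          obtain ⟨k, hk⟩ := hm.2
          omega
        · intro k _
          omega
        · intro m hm
          simp only [mem_filter] at hm
          simp [hΔ, hm.2]
      rw [hkey]
      have := ArithmeticFunction.coe_mul_zeta_apply
        (f := (ArithmeticFunction.moebius : ArithmeticFunction ℤ)) (x := Nat.fib n / 4)
      rw [ArithmeticFunction.moebius_mul_coe_zeta] at this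
      rw [← this, ArithmeticFunction.one_apply]
      have hge : Nat.fib n / 4 ≠ 1 := by
        have h8 : 8 ≤ Nat.fib n := by
          calc (8 : ℕ) = Nat.fib 6 := by decide
            _ ≤ Nat.fib n := Nat.fib_mono (Nat.le_of_dvd hn h6)
        omega
      simp [hge]
    · -- no divisor of fib n is divisible by 4
      apply Finset.sum_eq_zero
      intro m hm
      simp only [mem_filter, Nat.mem_divisors] at hm
      exfalso
      exact h6 ((four_dvd_fib_iff hn).mp (dvd_trans hm.2 hm.1.1))
  -- group the total sum by fibAlpha
  have hgroup : ∑ d ∈ n.divisors, alphaCon Δ d = ∑ m ∈ (Nat.fib n).divisors, Δ m := by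
    have hfib : ∀ d ∈ n.divisors, alphaCon Δ d
        = ∑ m ∈ (Nat.fib n).divisors.filter (fun m => fibAlpha m = d), Δ m := by
      intro d hd
      simp only [Nat.mem_divisors] at hd
      have hdpos : 0 < d := Nat.pos_of_dvd_of_pos hd.1 hn
      rw [alphaCon_eq_sum_divisors _ _ hdpos]
      congr 1
      ext m
      simp only [mem_filter, Nat.mem_divisors]
      constructor
      · rintro ⟨⟨h1, _⟩, ha⟩
        exact ⟨⟨h1.trans (Nat.fib_dvd _ _ hd.1), hfpos.ne'⟩, ha⟩
      · rintro ⟨⟨h1, _⟩, ha⟩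
        refine ⟨⟨?_, (Nat.fib_pos.mpr hdpos).ne'⟩, ha⟩
        exact dvd_fib_of_fibAlpha_dvd (Or.inl (ha ▸ hdpos)) (ha ▸ dvd_refl d)
    rw [Finset.sum_congr rfl hfib]
    rw [Finset.sum_fiberwise_of_maps_to]
    intro m hm
    simp only [Nat.mem_divisors] at hm
    have := fibAlpha_dvd hn hm.1
    simp only [Nat.mem_divisors]
    exact ⟨this.2, hn.ne'⟩
  -- conclude by strong induction
  have hsplit : ∑ d ∈ n.divisors, alphaCon Δ d
      = alphaCon Δ n + ∑ d ∈ n.properDivisors, alphaCon Δ d := by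
    rw [← Nat.insert_self_properDivisors hn.ne', Finset.sum_insert
      (fun h => (Nat.mem_properDivisors.mp h).2.false)]
  have hprop : ∑ d ∈ n.properDivisors, alphaCon Δ d = 0 := by
    apply Finset.sum_eq_zero
    intro d hd
    rw [Nat.mem_properDivisors] at hd
    exact ih d hd.2 (Nat.pos_of_dvd_of_pos hd.1 hn)
  rw [hgroup, htot] at hsplit
  omega
end
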